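/- Let p be an orthogonal partition of 2n all of whose parts are even (so every part occurs with even multiplicity). Then the Sp_{2n}-collapse of p^{+-} equals p itself: (p^{+-})_{Sp_{2n}} = p. -/

import Mathlib

namespace JiangWF

/-- `sCount p i` : the number of parts of `p` that are `≥ i`. -/
def sCount (p : Multiset ℕ) (i : ℕ) : ℕ := (p.filter (fun a => i ≤ a)).card

/-- `rCount p i` : the number of parts of `p` equal to `i`. -/
def rCount (p : Multiset ℕ) (i : ℕ) : ℕ := p.count i

/-- The largest part of `p` (`0` for the empty partition). -/
def maxPart (p : Multiset ℕ) : ℕ := p.sup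

/-- The smallest part of `p` (`0` for the empty partition). -/
noncomputable def minPart (p : Multiset ℕ) : ℕ := sInf {a : ℕ | a ∈ p}

/-- The transpose partition: its `i`-th part is `sCount p i`, for `1 ≤ i ≤ maxPart p`. -/
def transpose (p : Multiset ℕ) : Multiset ℕ :=
  (Multiset.range (maxPart p)).map fun i => sCount p (i + 1)

/-- The sum of the `m` largest parts of `p`. -/
def topSum (p : Multiset ℕ) (m : ℕ) : ℕ :=
  ∑ i ∈ Finset.Icc 1 p.sum, min m (sCount p i)

/-- Dominance order: `domLE p q` means `p ≤ q`. -/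
def domLE (p q : Multiset ℕ) : Prop := ∀ m, topSum p m ≤ topSum q m

/-- `p` is a partition of `N`: all parts positive, summing to `N`. -/
def IsPartitionOf (p : Multiset ℕ) (N : ℕ) : Prop := (∀ a ∈ p, 0 < a) ∧ p.sum = N

/-- Symplectic partition: every odd part occurs with even multiplicity. -/
def IsSymplectic (p : Multiset ℕ) : Prop := ∀ a, a % 2 = 1 → Even (p.count a)

/-- Orthogonal partition: every even part occurs with even multiplicity. -/
def IsOrthogonal (p : Multiset ℕ) : Prop := ∀ a, a % 2 = 0 → Even (p.count a)

/-- `p^-`: decrease the smallest part by one (deleting it if it becomes `0`). -/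
noncomputable def pMinus (p : Multiset ℕ) : Multiset ℕ :=
  if minPart p ≤ 1 then p.erase (minPart p)
  else (minPart p - 1) ::ₘ p.erase (minPart p)

/-- `p^+`: increase the largest part by one. -/
def pPlus (p : Multiset ℕ) : Multiset ℕ := (maxPart p + 1) ::ₘ p.erase (maxPart p)

/-- `p^{+-}`: increase the largest part by one and decrease the smallest by one. -/
noncomputable def pPM (p : Multiset ℕ) : Multiset ℕ := pMinus (pPlus p)

/-- `p₁ = [⌊b_1/2⌋^{a_1} ⋯ ⌊b_r/2⌋^{a_r}]^t` (discarding zero entries before transposing). -/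
def pOne (p : Multiset ℕ) : Multiset ℕ :=
  transpose ((p.map fun b => b / 2).filter fun x => 0 < x)

/-- `Σ_{i : b_i odd} a_i`: the number of odd parts of `p`. -/
def oddMult (p : Multiset ℕ) : ℕ := (p.filter fun a => a % 2 = 1).card

/-- `n* = ⌊(Σ_{i : b_i odd} a_i)/2⌋`. -/
def nStar (p : Multiset ℕ) : ℕ := oddMult p / 2

/-- Append an extra part `m` to `q`, omitted if `m = 0`. -/
def addPart (m : ℕ) (q : Multiset ℕ) : Multiset ℕ := if m = 0 then q else m ::ₘ q

/-- `c` is the `Sp`-collapse of `p`: the maximal symplectic partition `≤ p` in dominance. -/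
def IsSpCollapse (p c : Multiset ℕ) : Prop :=
  IsPartitionOf c p.sum ∧ IsSymplectic c ∧ domLE c p ∧
    ∀ c', IsPartitionOf c' p.sum → IsSymplectic c' → domLE c' p → domLE c' c

/-- `c` is the `SO`-collapse of `p`: the maximal orthogonal partition `≤ p` in dominance. -/
def IsSOCollapse (p c : Multiset ℕ) : Prop :=
  IsPartitionOf c p.sum ∧ IsOrthogonal c ∧ domLE c p ∧
    ∀ c', IsPartitionOf c' p.sum → IsOrthogonal c' → domLE c' p → domLE c' c

/-- `e` is the `Sp`-expansion of `p`: the minimal special symplectic partition `≥ p`. -/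
def IsSpExpansion (p e : Multiset ℕ) : Prop :=
  IsPartitionOf e p.sum ∧ IsSymplectic e ∧ IsSymplectic (transpose e) ∧ domLE p e ∧
    ∀ e', IsPartitionOf e' p.sum → IsSymplectic e' → IsSymplectic (transpose e') →
      domLE p e' → domLE e e'

/-- `e` is the `SO_{2n+1}`-expansion of `p`: the minimal special orthogonal partition `≥ p`
(odd case: special means the transpose is orthogonal). -/
def IsSOOddExpansion (p e : Multiset ℕ) : Prop :=
  IsPartitionOf e p.sum ∧ IsOrthogonal e ∧ IsOrthogonal (transpose e) ∧ domLE p e ∧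
    ∀ e', IsPartitionOf e' p.sum → IsOrthogonal e' → IsOrthogonal (transpose e') →
      domLE p e' → domLE e e'

/-- `e` is the `SO_{2n}`-expansion of `p`: the minimal special orthogonal partition `≥ p`
(even case: special means the transpose is symplectic). -/
def IsSOEvenExpansion (p e : Multiset ℕ) : Prop :=
  IsPartitionOf e p.sum ∧ IsOrthogonal e ∧ IsSymplectic (transpose e) ∧ domLE p e ∧
    ∀ e', IsPartitionOf e' p.sum → IsOrthogonal e' → IsSymplectic (transpose e') →
      domLE p e' → domLE e e'

/-- `dim_C(q)` for a symplectic partition `q` of `2k`: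
`2k² + k − (1/2)Σ s_i(q)² − (1/2)Σ_{i odd} r_i(q)` (note `2k² + k = (|q|² + |q|)/2`). -/
def dimC (p : Multiset ℕ) : ℚ :=
  ((p.sum : ℚ) ^ 2 + (p.sum : ℚ)) / 2
    - (∑ i ∈ Finset.Icc 1 p.sum, (sCount p i : ℚ) ^ 2) / 2
    - (∑ i ∈ Finset.Icc 1 p.sum, if i % 2 = 1 then (rCount p i : ℚ) else 0) / 2

/-- `dim_B(q)` for an orthogonal partition `q` of `2k+1`:
`2k² + k − (1/2)Σ s_i(q)² + (1/2)Σ_{i odd} r_i(q)` (note `2k² + k = (|q|² − |q|)/2`). -/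
def dimB (p : Multiset ℕ) : ℚ :=
  ((p.sum : ℚ) ^ 2 - (p.sum : ℚ)) / 2
    - (∑ i ∈ Finset.Icc 1 p.sum, (sCount p i : ℚ) ^ 2) / 2
    + (∑ i ∈ Finset.Icc 1 p.sum, if i % 2 = 1 then (rCount p i : ℚ) else 0) / 2

/-- `dim_D(q)` for an orthogonal partition `q` of `2k`:
`2k² − k − (1/2)Σ s_i(q)² + (1/2)Σ_{i odd} r_i(q)` (note `2k² − k = (|q|² − |q|)/2`). -/
def dimD (p : Multiset ℕ) : ℚ :=
  ((p.sum : ℚ) ^ 2 - (p.sum : ℚ)) / 2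
    - (∑ i ∈ Finset.Icc 1 p.sum, (sCount p i : ℚ) ^ 2) / 2
    + (∑ i ∈ Finset.Icc 1 p.sum, if i % 2 = 1 then (rCount p i : ℚ) else 0) / 2



/-! ### Auxiliary machinery for Statement 19 -/

/-- `FF q m S` : `topSum` with an explicit summation bound. -/
def FF (q : Multiset ℕ) (m S : ℕ) : ℕ := ∑ i ∈ Finset.Icc 1 S, min m (sCount q i)

/-- `PP q m S` : the `m`-th largest part of `q` (computed via column counts). -/
def PP (q : Multiset ℕ) (m S : ℕ) : ℕ :=
  ((Finset.Icc 1 S).filter (fun i => m ≤ sCount q i)).card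

lemma topSum_eq_FF (q : Multiset ℕ) (m : ℕ) : topSum q m = FF q m q.sum := rfl

lemma sCount_cons (a : ℕ) (q : Multiset ℕ) (i : ℕ) :
    sCount (a ::ₘ q) i = (if i ≤ a then 1 else 0) + sCount q i := by
  simp only [sCount, Multiset.filter_cons]
  split_ifs <;> simp [Nat.add_comm]

lemma sCount_zero (i : ℕ) : sCount 0 i = 0 := rfl

lemma sCount_anti (q : Multiset ℕ) {i j : ℕ} (h : i ≤ j) : sCount q j ≤ sCount q i := by
  induction q using Multiset.induction_on with
  | empty => simp [sCount_zero]
  | cons a q ih => rw [sCount_cons, sCount_cons]; split_ifs <;> omega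

lemma sCount_eq_zero (q : Multiset ℕ) (i : ℕ) (h : ∀ a ∈ q, a < i) : sCount q i = 0 := by
  unfold sCount
  rw [Multiset.card_eq_zero]
  rw [Multiset.filter_eq_nil]
  intro a ha
  have := h a ha
  omega

lemma sCount_le_card (q : Multiset ℕ) (i : ℕ) : sCount q i ≤ Multiset.card q :=
  Multiset.card_le_card (Multiset.filter_le _ _)

lemma card_le_sum (q : Multiset ℕ) : (∀ a ∈ q, 0 < a) → Multiset.card q ≤ q.sum := by
  induction q using Multiset.induction_on with
  | empty => intro _; simp
  | cons a q ih =>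
    intro h
    have h1 := h a (Multiset.mem_cons_self a q)
    have h2 := ih (fun b hb => h b (Multiset.mem_cons_of_mem hb))
    simp only [Multiset.card_cons, Multiset.sum_cons]
    omega

lemma mem_le_sum {q : Multiset ℕ} {a : ℕ} (h : a ∈ q) : a ≤ q.sum :=
  Multiset.single_le_sum (fun x _ => Nat.zero_le x) a h

lemma sum_sCount (S : ℕ) (q : Multiset ℕ) :
    (∀ a ∈ q, a ≤ S) → ∑ i ∈ Finset.Icc 1 S, sCount q i = q.sum := by
  induction q using Multiset.induction_on with
  | empty => intro _; simp [sCount_zero]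
  | cons a q ih =>
    intro hS
    have ha : a ≤ S := hS a (Multiset.mem_cons_self a q)
    simp only [sCount_cons, Multiset.sum_cons]
    rw [Finset.sum_add_distrib, ih (fun b hb => hS b (Multiset.mem_cons_of_mem hb))]
    have h1 : ∑ i ∈ Finset.Icc 1 S, (if i ≤ a then 1 else 0) = a := by
      rw [← Finset.card_filter]
      have h2 : (Finset.Icc 1 S).filter (fun i => i ≤ a) = Finset.Icc 1 a := by
        ext i
        simp only [Finset.mem_filter, Finset.mem_Icc]
        omega
      rw [h2, Nat.card_Icc]
      omega
    omega

lemma FF_zero (q : Multiset ℕ) (S : ℕ) : FF q 0 S = 0 := by simp [FF]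

lemma FF_succ (q : Multiset ℕ) (m S : ℕ) : FF q (m + 1) S = FF q m S + PP q (m + 1) S := by
  unfold FF PP
  rw [Finset.card_filter, ← Finset.sum_add_distrib]
  apply Finset.sum_congr rfl
  intro i _
  split_ifs with h <;> omega

lemma PP_anti (q : Multiset ℕ) (m S : ℕ) : PP q (m + 1) S ≤ PP q m S := by
  apply Finset.card_le_card
  intro i hi
  simp only [Finset.mem_filter] at hi ⊢
  exact ⟨hi.1, by omega⟩

lemma FF_total {q : Multiset ℕ} {S : ℕ} (hS : ∀ a ∈ q, a ≤ S) {m : ℕ}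
    (hm : Multiset.card q ≤ m) : FF q m S = q.sum := by
  unfold FF
  rw [← sum_sCount S q hS]
  apply Finset.sum_congr rfl
  intro i _
  have := sCount_le_card q i
  omega

lemma downclosed_eq_Icc (A : Finset ℕ) (h0 : 0 ∉ A)
    (hdc : ∀ j ∈ A, ∀ i, 1 ≤ i → i ≤ j → i ∈ A) : A = Finset.Icc 1 A.card := by
  rcases A.eq_empty_or_nonempty with h | h
  · subst h; simp
  · have hk : A = Finset.Icc 1 (A.max' h) := by
      ext i
      simp only [Finset.mem_Icc]
      constructor
      · intro hi
        refine ⟨?_, A.le_max' i hi⟩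
        rcases Nat.eq_zero_or_pos i with h' | h'
        · subst h'; exact absurd hi h0
        · exact h'
      · rintro ⟨h1, h2⟩
        exact hdc _ (A.max'_mem h) i h1 h2
    have hcard : A.card = A.max' h := by
      conv_lhs => rw [hk]
      rw [Nat.card_Icc]
      omega
    rw [hcard]
    exact hk

lemma filter_PP (q : Multiset ℕ) (m S : ℕ) :
    (Finset.Icc 1 S).filter (fun i => m ≤ sCount q i) = Finset.Icc 1 (PP q m S) := by
  apply downclosed_eq_Icc
  · simp
  · intro j hj i h1 h2
    simp only [Finset.mem_filter, Finset.mem_Icc] at hj ⊢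
    exact ⟨⟨h1, le_trans h2 hj.1.2⟩, le_trans hj.2 (sCount_anti q h2)⟩

lemma mem_iff_PP (q : Multiset ℕ) (S m : ℕ) {i : ℕ} (hi : i ∈ Finset.Icc 1 S) :
    m ≤ sCount q i ↔ i ≤ PP q m S := by
  constructor
  · intro h
    have h1 : i ∈ (Finset.Icc 1 S).filter (fun i => m ≤ sCount q i) :=
      Finset.mem_filter.mpr ⟨hi, h⟩
    rw [filter_PP] at h1
    exact (Finset.mem_Icc.mp h1).2
  · intro h
    have h1 : 1 ≤ i := (Finset.mem_Icc.mp hi).1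
    have h2 : i ∈ Finset.Icc 1 (PP q m S) := Finset.mem_Icc.mpr ⟨h1, h⟩
    rw [← filter_PP] at h2
    exact (Finset.mem_filter.mp h2).2

lemma PP_le (q : Multiset ℕ) (m S : ℕ) : PP q m S ≤ S := by
  have h1 := Finset.card_filter_le (Finset.Icc 1 S) (fun i => m ≤ sCount q i)
  have h2 : (Finset.Icc 1 S).card = S := by rw [Nat.card_Icc]; omega
  unfold PP
  omega

lemma PP_mem {q : Multiset ℕ} {S : ℕ} (hS : ∀ a ∈ q, a ≤ S) {m : ℕ} (hm : 1 ≤ m)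
    (hv : 1 ≤ PP q m S) : PP q m S ∈ q := by
  have hvS : PP q m S ≤ S := PP_le q m S
  have hmem : PP q m S ∈ Finset.Icc 1 S := Finset.mem_Icc.mpr ⟨hv, hvS⟩
  have h1 : m ≤ sCount q (PP q m S) := (mem_iff_PP q S m hmem).mpr le_rfl
  have h2 : sCount q (PP q m S + 1) < m := by
    by_cases h : PP q m S + 1 ≤ S
    · have hmem2 : PP q m S + 1 ∈ Finset.Icc 1 S := Finset.mem_Icc.mpr ⟨by omega, h⟩
      by_contra hcon
      push_neg at hcon
      have := (mem_iff_PP q S m hmem2).mp hcon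
      omega
    · have : sCount q (PP q m S + 1) = 0 :=
        sCount_eq_zero q _ (fun a ha => by have := hS a ha; omega)
      omega
  by_contra hnot
  have heq : q.filter (fun a => PP q m S ≤ a) = q.filter (fun a => PP q m S + 1 ≤ a) := by
    apply Multiset.filter_congr
    intro a ha
    constructor
    · intro hle
      rcases Nat.lt_or_ge a (PP q m S + 1) with h' | h'
      · have : a = PP q m S := by omega
        exact absurd (this ▸ ha) hnot
      · exact h'
    · omega
  have : sCount q (PP q m S) = sCount q (PP q m S + 1) := by
    unfold sCount
    rw [heq]
  omega

lemma sum_mod_two (q : Multiset ℕ) : q.sum % 2 = (q.filter (fun a => a % 2 = 1)).card % 2 := by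
  induction q using Multiset.induction_on with
  | empty => simp
  | cons a q ih =>
    rw [Multiset.sum_cons, Multiset.filter_cons]
    split_ifs with h <;>
      simp only [Multiset.card_add, Multiset.card_singleton, Multiset.card_zero] <;> omega

lemma even_card_of_counts (q : Multiset ℕ) (h : ∀ a, Even (q.count a)) :
    Even (Multiset.card q) := by
  rw [← Multiset.toFinset_sum_count_eq]
  exact Finset.even_sum _ (fun a _ => h a)

lemma symplectic_sum_even {q : Multiset ℕ} (h : IsSymplectic q) : Even q.sum := by
  have h1 : Even (q.filter (fun a => a % 2 = 1)).card := by
    apply even_card_of_counts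
    intro a
    rw [Multiset.count_filter]
    split_ifs with ha
    · exact h a ha
    · exact Even.zero
  rw [Nat.even_iff] at h1 ⊢
  rw [sum_mod_two]
  exact h1

lemma FF_at_sCount {q : Multiset ℕ} {S : ℕ} (hS : ∀ a ∈ q, a ≤ S) (v : ℕ) :
    FF q (sCount q v) S = (q.filter (fun a => v ≤ a)).sum := by
  rw [← sum_sCount S (q.filter (fun a => v ≤ a))
      (fun a ha => hS a (Multiset.mem_of_mem_filter ha))]
  apply Finset.sum_congr rfl
  intro i _
  show min (sCount q v) (sCount q i) = sCount (Multiset.filter (fun a => v ≤ a) q) i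
  unfold sCount
  rw [Multiset.filter_filter]
  rcases le_total i v with hiv | hiv
  · rw [Multiset.filter_congr (p := fun a => i ≤ a ∧ v ≤ a) (q := fun a => v ≤ a)
      (fun a _ => by omega)]
    have h1 := sCount_anti q hiv
    unfold sCount at h1
    omega
  · rw [Multiset.filter_congr (p := fun a => i ≤ a ∧ v ≤ a) (q := fun a => i ≤ a)
      (fun a _ => by omega)]
    have h1 := sCount_anti q hiv
    unfold sCount at h1
    omega

lemma lemmaA {c : Multiset ℕ} {S : ℕ} (hS : ∀ a ∈ c, a ≤ S) (hsymp : IsSymplectic c)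
    {m : ℕ} (hodd : ¬ Even (FF c m S)) : PP c (m + 1) S = PP c m S := by
  refine le_antisymm (PP_anti c m S) ?_
  by_contra hcon
  push_neg at hcon
  have hv1 : 1 ≤ PP c m S := by omega
  have hvS : PP c m S ≤ S := PP_le c m S
  have hmem : PP c m S ∈ Finset.Icc 1 S := Finset.mem_Icc.mpr ⟨hv1, hvS⟩
  have h1 : m ≤ sCount c (PP c m S) := (mem_iff_PP c S m hmem).mpr le_rfl
  have h2 : ¬ (m + 1 ≤ sCount c (PP c m S)) := by
    intro h
    have := (mem_iff_PP c S (m + 1) hmem).mp h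
    omega
  have hm_eq : sCount c (PP c m S) = m := by omega
  have hFeq := FF_at_sCount hS (PP c m S)
  rw [hm_eq] at hFeq
  apply hodd
  rw [hFeq]
  apply symplectic_sum_even
  intro a ha
  rw [Multiset.count_filter]
  split_ifs with h
  · exact hsymp a ha
  · exact Even.zero

lemma FF_even {p : Multiset ℕ} {S : ℕ} (hS : ∀ a ∈ p, a ≤ S)
    (heven : ∀ a ∈ p, a % 2 = 0) : ∀ m, Even (FF p m S) := by
  intro m
  induction m with
  | zero => simp [FF_zero]
  | succ k ih =>
    rw [FF_succ]
    apply Even.add ih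
    by_cases h : PP p (k + 1) S = 0
    · simp [h]
    · have hmem := PP_mem hS (by omega : 1 ≤ k + 1) (by omega)
      exact Nat.even_iff.mpr (heven _ hmem)

lemma sCount_split (q : Multiset ℕ) (a : ℕ) : sCount q a = q.count a + sCount q (a + 1) := by
  induction q using Multiset.induction_on with
  | empty => simp [sCount_zero]
  | cons x q ih =>
    rw [sCount_cons, sCount_cons, Multiset.count_cons]
    split_ifs <;> omega

lemma eq_of_FF_eq {c p : Multiset ℕ} (hcpos : ∀ a ∈ c, 0 < a) (hppos : ∀ a ∈ p, 0 < a)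
    (hsum : c.sum = p.sum) (hF : ∀ m, FF c m p.sum = FF p m p.sum) : c = p := by
  have hS_p : ∀ a ∈ p, a ≤ p.sum := fun a ha => mem_le_sum ha
  have hS_c : ∀ a ∈ c, a ≤ p.sum := fun a ha => by have := mem_le_sum ha; omega
  have hcard_c : Multiset.card c ≤ p.sum := by have := card_le_sum c hcpos; omega
  have hcard_p : Multiset.card p ≤ p.sum := card_le_sum p hppos
  have hP : ∀ m, 1 ≤ m → PP c m p.sum = PP p m p.sum := by
    intro m hm
    obtain ⟨k, rfl⟩ : ∃ k, m = k + 1 := ⟨m - 1, by omega⟩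
    have h1 := FF_succ c k p.sum
    have h2 := FF_succ p k p.sum
    have h3 := hF k
    have h4 := hF (k + 1)
    omega
  have key : ∀ (q : Multiset ℕ), (∀ a ∈ q, a ≤ p.sum) → Multiset.card q ≤ p.sum →
      ∀ i, i ∈ Finset.Icc 1 p.sum →
      sCount q i = ((Finset.Icc 1 p.sum).filter (fun m => i ≤ PP q m p.sum)).card := by
    intro q hq hqc i hmem
    have hle : sCount q i ≤ p.sum := le_trans (sCount_le_card q i) hqc
    have h1 : (Finset.Icc 1 p.sum).filter (fun m => m ≤ sCount q i) =
        Finset.Icc 1 (sCount q i) := by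
      ext m
      simp only [Finset.mem_filter, Finset.mem_Icc]
      omega
    have h2 : (Finset.Icc 1 p.sum).filter (fun m => m ≤ sCount q i) =
        (Finset.Icc 1 p.sum).filter (fun m => i ≤ PP q m p.sum) := by
      apply Finset.filter_congr
      intro m _
      exact mem_iff_PP q p.sum m hmem
    rw [← h2, h1, Nat.card_Icc]
    omega
  have hsCount : ∀ i, 1 ≤ i → sCount c i = sCount p i := by
    intro i hi
    by_cases hiS : i ≤ p.sum
    · have hmem : i ∈ Finset.Icc 1 p.sum := Finset.mem_Icc.mpr ⟨hi, hiS⟩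
      rw [key c hS_c hcard_c i hmem, key p hS_p hcard_p i hmem]
      congr 1
      apply Finset.filter_congr
      intro m hm
      have hm1 : 1 ≤ m := (Finset.mem_Icc.mp hm).1
      rw [hP m hm1]
    · push_neg at hiS
      rw [sCount_eq_zero c i (fun a ha => by have := hS_c a ha; omega),
        sCount_eq_zero p i (fun a ha => by have := hS_p a ha; omega)]
  apply Multiset.ext.mpr
  intro a
  rcases Nat.eq_zero_or_pos a with rfl | ha
  · have hc0 : (0 : ℕ) ∉ c := fun h => lt_irrefl 0 (hcpos 0 h)
    have hp0 : (0 : ℕ) ∉ p := fun h => lt_irrefl 0 (hppos 0 h)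
    rw [Multiset.count_eq_zero.mpr hc0, Multiset.count_eq_zero.mpr hp0]
  · have h1 := sCount_split c a
    have h2 := sCount_split p a
    have h3 := hsCount a ha
    have h4 := hsCount (a + 1) (by omega)
    omega

lemma maxPart_mem (q : Multiset ℕ) (h : q ≠ 0) : maxPart q ∈ q := by
  induction q using Multiset.induction_on with
  | empty => exact absurd rfl h
  | cons a q ih =>
    by_cases hq : q = 0
    · subst hq; simp [maxPart]
    · have hmem := ih hq
      simp only [maxPart, Multiset.sup_cons] at *
      rcases le_total a q.sup with h' | h'
      · rw [sup_eq_right.mpr h']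
        exact Multiset.mem_cons_of_mem hmem
      · rw [sup_eq_left.mpr h']
        exact Multiset.mem_cons_self _ _

lemma minPart_mem {q : Multiset ℕ} (h : q ≠ 0) : minPart q ∈ q := by
  obtain ⟨a, ha⟩ := Multiset.exists_mem_of_ne_zero h
  have hne : {x : ℕ | x ∈ q}.Nonempty := ⟨a, by exact ha⟩
  exact Nat.sInf_mem hne

lemma minPart_le {q : Multiset ℕ} {a : ℕ} (h : a ∈ q) : minPart q ≤ a :=
  Nat.sInf_le (by exact h)

/-- `p` an orthogonal partition of `2n` all of whose parts are even.
Then `(p^{+-})_{Sp_{2n}} = p`. -/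
theorem collapse_pPM_of_even_parts (n : ℕ) (p : Multiset ℕ)
    (hp : IsPartitionOf p (2 * n)) (horth : IsOrthogonal p)
    (heven : ∀ a ∈ p, a % 2 = 0)
    (c : Multiset ℕ) (hc : IsSpCollapse (pPM p) c) :
    c = p := by
  by_cases hp0 : p = 0
  · subst hp0
    have hplus : pPlus (0 : Multiset ℕ) = {1} := by
      simp [pPlus, maxPart]
    have hmin : minPart ({1} : Multiset ℕ) = 1 := by
      have h1 : (1 : ℕ) ∈ {a : ℕ | a ∈ ({1} : Multiset ℕ)} := by simp
      have h2 := Nat.sInf_mem ⟨1, h1⟩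
      simp only [Set.mem_setOf_eq, Multiset.mem_singleton] at h2
      simpa [minPart] using h2
    have hPM : pPM (0 : Multiset ℕ) = 0 := by
      rw [pPM, hplus, pMinus, hmin]
      simp
    rw [hPM] at hc
    obtain ⟨⟨hpos, hsum⟩, -, -, -⟩ := hc
    have hsum0 : c.sum = 0 := by rw [hsum]; rfl
    by_contra hne
    obtain ⟨a, ha⟩ := Multiset.exists_mem_of_ne_zero hne
    have h1 := hpos a ha
    have h2 := mem_le_sum ha
    omega
  · have hM : maxPart p ∈ p := maxPart_mem p hp0
    have hMle : ∀ a ∈ p, a ≤ maxPart p := fun a ha => Multiset.le_sup ha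
    have hm₀ : minPart p ∈ p := minPart_mem hp0
    have hm₀le : ∀ a ∈ p, minPart p ≤ a := fun a ha => minPart_le ha
    set M := maxPart p with hM_def
    set m₀ := minPart p with hm0_def
    have hm₀M : m₀ ≤ M := hMle m₀ hm₀
    have hm₀even : m₀ % 2 = 0 := heven m₀ hm₀
    have hm₀pos : 0 < m₀ := hp.1 m₀ hm₀
    have hm₀2 : 2 ≤ m₀ := by omega
    have hm₀erase : m₀ ∈ p.erase M := by
      by_cases h : m₀ = M
      · have hcount : Even (p.count m₀) := horth m₀ hm₀even
        have hposc : 0 < p.count m₀ := Multiset.count_pos.mpr hm₀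
        have h2 : 2 ≤ p.count m₀ := by
          rcases hcount with ⟨k, hk⟩; omega
        rw [← Multiset.count_pos, h, Multiset.count_erase_self]
        rw [h] at h2
        omega
      · exact (Multiset.mem_erase_of_ne h).mpr hm₀
    set r := (p.erase M).erase m₀ with hr_def
    have hp_eq : p = M ::ₘ m₀ ::ₘ r := by
      rw [hr_def, Multiset.cons_erase hm₀erase, Multiset.cons_erase hM]
    have hplus : pPlus p = (M + 1) ::ₘ m₀ ::ₘ r := by
      rw [show pPlus p = (M + 1) ::ₘ p.erase M from rfl,
        ← Multiset.cons_erase hm₀erase]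
    have hminplus : minPart (pPlus p) = m₀ := by
      have hmem : m₀ ∈ pPlus p := by
        rw [hplus]; exact Multiset.mem_cons_of_mem (Multiset.mem_cons_self _ _)
      have hle : ∀ a ∈ pPlus p, m₀ ≤ a := by
        intro a ha
        rw [hplus] at ha
        rcases Multiset.mem_cons.mp ha with rfl | ha'
        · omega
        · rcases Multiset.mem_cons.mp ha' with rfl | ha''
          · exact le_rfl
          · exact hm₀le a (by
              rw [hp_eq]
              exact Multiset.mem_cons_of_mem (Multiset.mem_cons_of_mem ha''))
      have hne : pPlus p ≠ 0 := by
        rw [hplus]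
        exact Multiset.cons_ne_zero
      have h1 := minPart_mem hne
      exact le_antisymm (minPart_le hmem) (hle _ h1)
    have hPM : pPM p = (m₀ - 1) ::ₘ (M + 1) ::ₘ r := by
      rw [pPM, pMinus, hminplus, if_neg (by omega), hplus,
        Multiset.erase_cons_tail _ (by omega : (M + 1 : ℕ) ≠ m₀),
        Multiset.erase_cons_head]
    have hsum' : (pPM p).sum = p.sum := by
      rw [hPM]
      conv_rhs => rw [hp_eq]
      simp only [Multiset.sum_cons]
      omega
    have hcard_p : Multiset.card p = Multiset.card r + 2 := by rw [hp_eq]; simp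
    have hcard_p' : Multiset.card (pPM p) = Multiset.card r + 2 := by rw [hPM]; simp
    have hS_p : ∀ a ∈ p, a ≤ p.sum := fun a ha => mem_le_sum ha
    have hS_p' : ∀ a ∈ pPM p, a ≤ p.sum := by
      intro a ha
      have := mem_le_sum ha
      omega
    obtain ⟨⟨hcpos, hcsum0⟩, hcsymp, hcdom, hcmax⟩ := hc
    have hcsum : c.sum = p.sum := by rw [hcsum0, hsum']
    have hS_c : ∀ a ∈ c, a ≤ p.sum := by
      intro a ha
      have := mem_le_sum ha
      omega
    have hr_mem : ∀ a ∈ r, m₀ ≤ a ∧ a ≤ M := by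
      intro a ha
      have hap : a ∈ p := Multiset.mem_of_mem_erase (Multiset.mem_of_mem_erase ha)
      exact ⟨hm₀le a hap, hMle a hap⟩
    have hsr : sCount r m₀ = Multiset.card r := by
      unfold sCount
      rw [Multiset.filter_eq_self.mpr (fun a ha => (hr_mem a ha).1)]
    have hsCp : ∀ i, sCount p i =
        (if i ≤ M then 1 else 0) + ((if i ≤ m₀ then 1 else 0) + sCount r i) := by
      intro i
      conv_lhs => rw [hp_eq]
      rw [sCount_cons, sCount_cons]
    have hsCp' : ∀ i, sCount (pPM p) i =
        (if i ≤ m₀ - 1 then 1 else 0) + ((if i ≤ M + 1 then 1 else 0) + sCount r i) := by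
      intro i
      rw [hPM, sCount_cons, sCount_cons]
    have dir2 : ∀ m, FF (pPM p) m p.sum ≤ FF p m p.sum + 1 := by
      intro m
      have step : ∀ i ∈ Finset.Icc 1 p.sum,
          min m (sCount (pPM p) i) ≤ min m (sCount p i) + (if i = M + 1 then 1 else 0) := by
        intro i _
        by_cases hi : i = M + 1
        · subst hi
          rw [if_pos rfl, hsCp', hsCp]
          have h3 : sCount r (M + 1) = 0 :=
            sCount_eq_zero r (M + 1) (fun a ha => by have := (hr_mem a ha).2; omega)
          rw [h3]
          split_ifs <;> omega
        · rw [if_neg hi, add_zero, hsCp', hsCp]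
          split_ifs <;> omega
      calc FF (pPM p) m p.sum
          ≤ ∑ i ∈ Finset.Icc 1 p.sum,
              (min m (sCount p i) + (if i = M + 1 then 1 else 0)) :=
            Finset.sum_le_sum step
        _ = FF p m p.sum + ∑ i ∈ Finset.Icc 1 p.sum, (if i = M + 1 then 1 else 0) := by
            rw [Finset.sum_add_distrib]; rfl
        _ ≤ FF p m p.sum + 1 := by
            have h1 : ∑ i ∈ Finset.Icc 1 p.sum, (if i = M + 1 then (1 : ℕ) else 0) =
                if M + 1 ∈ Finset.Icc 1 p.sum then 1 else 0 := Finset.sum_ite_eq' _ _ _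
            rw [h1]
            split_ifs <;> omega
    have dir1 : ∀ m, FF p m p.sum ≤ FF (pPM p) m p.sum := by
      intro m
      by_cases hm : Multiset.card r + 2 ≤ m
      · rw [FF_total hS_p (by omega), FF_total hS_p' (by omega)]
        omega
      · apply Finset.sum_le_sum
        intro i _
        by_cases hi : i = m₀
        · subst hi
          rw [hsCp, hsCp', hsr]
          split_ifs <;> omega
        · rw [hsCp, hsCp']
          split_ifs <;> omega
    have h_c_le_p' : ∀ m, FF c m p.sum ≤ FF (pPM p) m p.sum := by
      intro m
      have h1 := hcdom m
      rw [topSum_eq_FF, topSum_eq_FF, hcsum, hsum'] at h1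
      exact h1
    have h_le1 : ∀ m, FF c m p.sum ≤ FF p m p.sum + 1 :=
      fun m => le_trans (h_c_le_p' m) (dir2 m)
    have hpEven : ∀ m, Even (FF p m p.sum) := FF_even hS_p heven
    have hcp : ∀ m, FF c m p.sum ≤ FF p m p.sum := by
      intro m
      induction m with
      | zero => rw [FF_zero, FF_zero]
      | succ k ih =>
        by_contra hlt
        push_neg at hlt
        have h8 : FF c (k + 1) p.sum = FF p (k + 1) p.sum + 1 :=
          le_antisymm (h_le1 _) (by omega)
        have hodd : ¬ Even (FF c (k + 1) p.sum) := by
          rw [h8]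
          have h9 := hpEven (k + 1)
          rw [Nat.even_iff] at h9 ⊢
          omega
        have h5 := lemmaA hS_c hcsymp hodd
        have e1 := FF_succ c k p.sum
        have e2 := FF_succ p k p.sum
        have e3 := FF_succ c (k + 1) p.sum
        have e4 := FF_succ p (k + 1) p.sum
        have h6 := PP_anti p (k + 1) p.sum
        have h9 := h_le1 ((k + 1) + 1)
        omega
    have hsymp_p : IsSymplectic p := by
      intro a ha
      have h0 : p.count a = 0 :=
        Multiset.count_eq_zero.mpr (fun h => by have := heven a h; omega)
      rw [h0]
      exact Even.zero
    have hpart_p : IsPartitionOf p (pPM p).sum := ⟨hp.1, hsum'.symm⟩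
    have hdomp : domLE p (pPM p) := by
      intro m
      rw [topSum_eq_FF, topSum_eq_FF, hsum']
      exact dir1 m
    have hpc := hcmax p hpart_p hsymp_p hdomp
    have hFF_eq : ∀ m, FF c m p.sum = FF p m p.sum := by
      intro m
      have h1 := hpc m
      rw [topSum_eq_FF, topSum_eq_FF, hcsum] at h1
      exact le_antisymm (hcp m) h1
    exact eq_of_FF_eq hcpos hp.1 hcsum hFF_eq


end JiangWF
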